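/- If a shaping function F : S × A × S → ℝ depends only on (s, s') (i.e., F(s,a,s') = G(s,s')) and preserves the identity Q*_{M'} = Q*_M − Φ for some Φ : S → ℝ on all MDPs over (S, A, T, γ), in particular on deterministic single-transition MDPs, then F must satisfy E-consistency F(s,a,s') = γΦ(s') − Φ(s) on all reachable transitions of any deterministic MDP. -/

import Mathlib

/-- Necessity direction (deterministic case) of the policy-invariance theorem:
if a shaping function `F` depends only on `(s, s')` and, for every deterministic
transition function and every reward function, the shaped optimal Q-function
equals the original optimal Q-function minus `Φ`, then
`F s a (t s a) = γ * Φ (t s a) - Φ s` on all reachable transitions of any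
deterministic MDP. -/
theorem potential_shaping_necessity_deterministic
    {S A : Type*} [Fintype S] [Fintype A] [Nonempty A]
    (γ : ℝ) (hγ0 : 0 < γ) (hγ1 : γ < 1)
    (F : S → A → S → ℝ) (G : S → S → ℝ)
    (hF : ∀ s a s', F s a s' = G s s')
    (Φ : S → ℝ)
    (hinv : ∀ (t : S → A → S) (R : S → A → S → ℝ) (Q Q' : S → A → ℝ),
      (∀ s a, Q s a = R s a (t s a) + γ * ⨆ a', Q (t s a) a') →
      (∀ s a, Q' s a = R s a (t s a) + F s a (t s a) + γ * ⨆ a', Q' (t s a) a') →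
      ∀ s a, Q' s a = Q s a - Φ s) :
    ∀ (t : S → A → S) (s : S) (a : A), F s a (t s a) = γ * Φ (t s a) - Φ s := by
  intro t s a
  set s₁ := t s a with hs₁
  have hγ : (1 : ℝ) - γ ≠ 0 := by linarith
  -- constant transition, zero reward
  set Q' : S → A → ℝ := fun u _ => G u s₁ + γ * (G s₁ s₁ / (1 - γ)) with hQ'
  have hsup : (⨆ a' : A, Q' s₁ a') = G s₁ s₁ / (1 - γ) := by
    have : (⨆ _ : A, (G s₁ s₁ + γ * (G s₁ s₁ / (1 - γ)))) =
        G s₁ s₁ + γ * (G s₁ s₁ / (1 - γ)) := ciSup_const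
    rw [hQ']
    rw [this]
    field_simp
    ring
  have key := hinv (fun _ _ => s₁) (fun _ _ _ => 0) (fun _ _ => 0) Q'
    (by
      intro u b
      simp [ciSup_const])
    (by
      intro u b
      simp only [hQ', hF]
      rw [show (⨆ a' : A, (G s₁ s₁ + γ * (G s₁ s₁ / (1 - γ)))) =
        G s₁ s₁ + γ * (G s₁ s₁ / (1 - γ)) from ciSup_const]
      field_simp
      ring_nf)
  have h1 : G s s₁ + γ * (G s₁ s₁ / (1 - γ)) = -Φ s := by
    have := key s a; simpa [hQ'] using this
  have h2 : G s₁ s₁ + γ * (G s₁ s₁ / (1 - γ)) = -Φ s₁ := by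
    have := key s₁ a; simpa [hQ'] using this
  have h3 : G s₁ s₁ / (1 - γ) = -Φ s₁ := by
    field_simp at h2 ⊢
    linarith
  rw [hF]
  rw [h3] at h1
  linarith
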